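/- Let 0 < q < 1, c ∈ R^×, n ∈ Z≥0. On C^{n+1} with orthonormal basis e_0,...,e_n, define z e_k = c q^{-n+2k} e_k, and let v, w = v* be the unique operators with v e_0 = 0 such that the relations zw = q²wz, vz = q²zv, q^{-2}vw = −D + qTz − q²z², q^{-2}wv = −D + q^{-1}Tz − q^{-2}z² hold, where T = c(q^{n+1} + q^{-n-1}) and D = c². Then this defines an irreducible *-representation of O_q(H(2)) (i.e. such operators v, w exist, the relations are satisfied, and the commutant is trivial). -/

import Mathlib

open Matrix Finset

namespace OqH2Aux

noncomputable def lam (q c : ℝ) (n : ℕ) (k : Fin (n+1)) : ℂ :=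
  (c : ℂ) * (q : ℂ) ^ (-(n : ℤ) + 2 * (k : ℤ))

noncomputable def gam (q c : ℝ) (n : ℕ) (k : Fin (n+1)) : ℝ :=
  |c| * q * Real.sqrt ((1 - q ^ (2*(k:ℕ)+2)) * (q ^ (2*(k:ℤ) - 2*(n:ℤ)) - 1))

variable {q c : ℝ} {n : ℕ}

lemma P_nonneg (hq0 : 0 < q) (hq1 : q < 1) (k : Fin (n+1)) :
    0 ≤ (1 - q ^ (2*(k:ℕ)+2)) * (q ^ (2*(k:ℤ) - 2*(n:ℤ)) - 1) := by
  apply mul_nonneg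
  · have : q ^ (2*(k:ℕ)+2) ≤ 1 := pow_le_one₀ hq0.le hq1.le
    linarith
  · have : (1:ℝ) ≤ q ^ (2*(k:ℤ) - 2*(n:ℤ)) := by
      apply one_le_zpow_of_nonpos₀ hq0 hq1.le
      have := k.isLt; omega
    linarith

lemma gam_sq (hq0 : 0 < q) (hq1 : q < 1) (k : Fin (n+1)) :
    (gam q c n k) ^ 2
      = c^2 * q^2 * ((1 - q ^ (2*(k:ℕ)+2)) * (q ^ (2*(k:ℤ) - 2*(n:ℤ)) - 1)) := by
  rw [gam, mul_pow, mul_pow, sq_abs, Real.sq_sqrt (P_nonneg hq0 hq1 k)]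

lemma gam_eq_zero_of_last (k : Fin (n+1)) (hk : (k:ℕ) = n) : gam q c n k = 0 := by
  rw [gam]
  have : 2*(k:ℤ) - 2*(n:ℤ) = 0 := by omega
  rw [this, zpow_zero, sub_self, mul_zero, Real.sqrt_zero, mul_zero]

lemma gam_pos (hq0 : 0 < q) (hq1 : q < 1) (hc : c ≠ 0) (k : Fin (n+1)) (hk : (k:ℕ) < n) :
    0 < gam q c n k := by
  rw [gam]
  apply mul_pos (mul_pos (abs_pos.mpr hc) hq0)
  apply Real.sqrt_pos.mpr
  apply mul_pos
  · have : q ^ (2*(k:ℕ)+2) < 1 := pow_lt_one₀ hq0.le hq1 (by omega)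
    linarith
  · have : (1:ℝ) < q ^ (2*(k:ℤ) - 2*(n:ℤ)) := by
      apply one_lt_zpow_of_neg₀ hq0 hq1 (by omega)
    linarith

end OqH2Aux

namespace OqH2Aux
variable {q c : ℝ} {n : ℕ}

lemma idA (hq0 : 0 < q) (hq1 : q < 1) (k : Fin (n+1)) :
    ((q:ℂ)^2)⁻¹ * ((gam q c n k : ℝ) : ℂ)^2
      = -((c:ℂ)^2)
        + (q:ℂ) * ((c:ℂ) * ((q:ℂ)^((n:ℤ)+1) + (q:ℂ)^(-(n:ℤ)-1))) * lam q c n k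
        - (q:ℂ)^2 * (lam q c n k)^2 := by
  have hQ : (q:ℂ) ≠ 0 := by exact_mod_cast hq0.ne'
  have h1 : ((gam q c n k : ℝ) : ℂ)^2
      = (c:ℂ)^2 * (q:ℂ)^2
        * ((1 - (q:ℂ) ^ (2*(k:ℕ)+2)) * ((q:ℂ) ^ (2*(k:ℤ) - 2*(n:ℤ)) - 1)) := by
    have := congrArg (Complex.ofReal) (gam_sq (c := c) hq0 hq1 k)
    push_cast at this
    exact this
  rw [h1, lam]
  rw [show (-(n:ℤ)+2*(k:ℤ)) = ((2*(k:ℕ) : ℕ):ℤ) - ((n:ℕ):ℤ) by push_cast; ring,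
      show (2*(k:ℤ)-2*(n:ℤ)) = ((2*(k:ℕ) : ℕ):ℤ) - ((2*n : ℕ):ℤ) by push_cast; ring,
      show ((n:ℤ)+1) = (((n+1:ℕ)):ℤ) by push_cast; ring,
      show (-(n:ℤ)-1) = -(((n+1:ℕ)):ℤ) by push_cast; ring]
  rw [zpow_sub₀ hQ, zpow_sub₀ hQ, _root_.zpow_neg, zpow_natCast, zpow_natCast, zpow_natCast,
      zpow_natCast]
  field_simp
  ring

end OqH2Aux

namespace OqH2Aux
variable {q c : ℝ} {n : ℕ}

lemma idB0 (hq0 : 0 < q) (hq1 : q < 1) :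
    (0:ℂ)
      = -((c:ℂ)^2)
        + (q:ℂ)⁻¹ * ((c:ℂ) * ((q:ℂ)^((n:ℤ)+1) + (q:ℂ)^(-(n:ℤ)-1))) * lam q c n 0
        - ((q:ℂ)^2)⁻¹ * (lam q c n 0)^2 := by
  have hQ : (q:ℂ) ≠ 0 := by exact_mod_cast hq0.ne'
  rw [lam]
  rw [show (-(n:ℤ)+2*(((0:Fin (n+1))):ℤ)) = ((0:ℕ):ℤ) - ((n:ℕ):ℤ) by simp,
      show ((n:ℤ)+1) = (((n+1:ℕ)):ℤ) by push_cast; ring,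
      show (-(n:ℤ)-1) = -(((n+1:ℕ)):ℤ) by push_cast; ring]
  rw [zpow_sub₀ hQ, _root_.zpow_neg, zpow_natCast, zpow_natCast, zpow_natCast]
  field_simp
  ring

lemma idB (hq0 : 0 < q) (hq1 : q < 1) (k i : Fin (n+1)) (hik : (i:ℕ) = (k:ℕ)+1) :
    ((q:ℂ)^2)⁻¹ * ((gam q c n k : ℝ) : ℂ)^2
      = -((c:ℂ)^2)
        + (q:ℂ)⁻¹ * ((c:ℂ) * ((q:ℂ)^((n:ℤ)+1) + (q:ℂ)^(-(n:ℤ)-1))) * lam q c n i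
        - ((q:ℂ)^2)⁻¹ * (lam q c n i)^2 := by
  have hQ : (q:ℂ) ≠ 0 := by exact_mod_cast hq0.ne'
  have h1 : ((gam q c n k : ℝ) : ℂ)^2
      = (c:ℂ)^2 * (q:ℂ)^2
        * ((1 - (q:ℂ) ^ (2*(k:ℕ)+2)) * ((q:ℂ) ^ (2*(k:ℤ) - 2*(n:ℤ)) - 1)) := by
    have := congrArg (Complex.ofReal) (gam_sq (c := c) hq0 hq1 k)
    push_cast at this
    exact this
  rw [h1, lam]
  rw [show (-(n:ℤ)+2*(i:ℤ)) = ((2*(k:ℕ)+2 : ℕ):ℤ) - ((n:ℕ):ℤ) by push_cast [hik]; omega,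
      show (2*(k:ℤ)-2*(n:ℤ)) = ((2*(k:ℕ) : ℕ):ℤ) - ((2*n : ℕ):ℤ) by push_cast; ring,
      show ((n:ℤ)+1) = (((n+1:ℕ)):ℤ) by push_cast; ring,
      show (-(n:ℤ)-1) = -(((n+1:ℕ)):ℤ) by push_cast; ring]
  rw [zpow_sub₀ hQ, zpow_sub₀ hQ, _root_.zpow_neg, zpow_natCast, zpow_natCast, zpow_natCast,
      zpow_natCast]
  rw [show 2*(k:ℕ)+2 = (k:ℕ)*2+2 by ring, show 2*(k:ℕ) = (k:ℕ)*2 by ring,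
      show 2*n = n*2 by ring,
      pow_add (q:ℂ) ((k:ℕ)*2) 2, pow_mul (q:ℂ) (k:ℕ) 2, pow_mul (q:ℂ) n 2,
      pow_add (q:ℂ) n 1]
  field_simp
  simp only [zpow_natCast]
  ring

lemma lam_succ (hq : (q:ℂ) ≠ 0) {i j : Fin (n+1)} (h : (i:ℕ) = (j:ℕ)+1) :
    lam q c n i = (q:ℂ)^2 * lam q c n j := by
  rw [lam, lam, show (-(n:ℤ)+2*(i:ℤ)) = 2 + (-(n:ℤ)+2*(j:ℤ)) by push_cast [h]; omega,
      zpow_add₀ hq]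
  rw [show (2:ℤ) = ((2:ℕ):ℤ) from rfl, zpow_natCast]; ring

lemma lam_conj (k : Fin (n+1)) : star (lam q c n k) = lam q c n k := by
  simp [lam, Complex.star_def, ← Complex.ofReal_zpow, Complex.conj_ofReal]

lemma lam_inj (hq0 : 0 < q) (hq1 : q < 1) (hc : c ≠ 0) {i j : Fin (n+1)}
    (h : lam q c n i = lam q c n j) : i = j := by
  rw [lam, lam] at h
  have hc' : (c:ℂ) ≠ 0 := by exact_mod_cast hc
  have h2 : (q:ℂ) ^ (-(n:ℤ) + 2*(i:ℤ)) = (q:ℂ) ^ (-(n:ℤ) + 2*(j:ℤ)) :=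
    mul_left_cancel₀ hc' h
  rw [← Complex.ofReal_zpow, ← Complex.ofReal_zpow] at h2
  have h3 : q ^ (-(n:ℤ) + 2*(i:ℤ)) = q ^ (-(n:ℤ) + 2*(j:ℤ)) := by exact_mod_cast h2
  have h4 : -(n:ℤ) + 2*(i:ℤ) = -(n:ℤ) + 2*(j:ℤ) :=
    zpow_right_injective₀ hq0 hq1.ne h3
  have : (i:ℕ) = (j:ℕ) := by omega
  exact Fin.ext this

end OqH2Aux

namespace OqH2Aux
variable {q c : ℝ} {n : ℕ}

noncomputable def Zm (q c : ℝ) (n : ℕ) : Matrix (Fin (n+1)) (Fin (n+1)) ℂ :=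
  Matrix.diagonal (lam q c n)

noncomputable def Wm (q c : ℝ) (n : ℕ) : Matrix (Fin (n+1)) (Fin (n+1)) ℂ :=
  Matrix.of fun i j => if (i:ℕ) = (j:ℕ)+1 then ((gam q c n j : ℝ) : ℂ) else 0

lemma Wm_conjT_apply (i j : Fin (n+1)) :
    (Wm q c n)ᴴ i j = if (j:ℕ) = (i:ℕ)+1 then ((gam q c n i : ℝ) : ℂ) else 0 := by
  rw [Matrix.conjTranspose_apply, Wm]
  simp [apply_ite star, Complex.star_def, Complex.conj_ofReal]

lemma sum_shift_up (g : Fin (n+1) → ℂ) (i : Fin (n+1)) :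
    ∑ l : Fin (n+1), (if (l:ℕ) = (i:ℕ)+1 then g l else 0)
      = if h : (i:ℕ) < n then g ⟨(i:ℕ)+1, by omega⟩ else 0 := by
  split_ifs with h
  · rw [Finset.sum_eq_single (⟨(i:ℕ)+1, by omega⟩ : Fin (n+1))]
    · simp
    · intro b _ hb
      rw [if_neg]
      intro hb'
      exact hb (Fin.ext hb')
    · simp
  · apply Finset.sum_eq_zero
    intro l _
    rw [if_neg]
    have := l.isLt
    omega

lemma sum_shift_down (g : Fin (n+1) → ℂ) (i : Fin (n+1)) :
    ∑ l : Fin (n+1), (if (i:ℕ) = (l:ℕ)+1 then g l else 0)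
      = if h : 0 < (i:ℕ) then g ⟨(i:ℕ)-1, by omega⟩ else 0 := by
  split_ifs with h
  · rw [Finset.sum_eq_single (⟨(i:ℕ)-1, by omega⟩ : Fin (n+1))]
    · rw [if_pos]
      simp
      omega
    · intro b _ hb
      rw [if_neg]
      intro hb'
      apply hb
      apply Fin.ext
      simp
      omega
    · simp
  · apply Finset.sum_eq_zero
    intro l _
    rw [if_neg]
    omega

end OqH2Aux

namespace OqH2Aux
variable {q c : ℝ} {n : ℕ}

lemma rel1 (hq0 : 0 < q) (hq1 : q < 1) :
    Zm q c n * Wm q c n = ((q:ℂ)^2) • (Wm q c n * Zm q c n) := by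
  have hQ : (q:ℂ) ≠ 0 := by exact_mod_cast hq0.ne'
  ext i j
  rw [Zm, Matrix.smul_apply, Matrix.diagonal_mul, Matrix.mul_diagonal]
  by_cases h : (i:ℕ) = (j:ℕ)+1
  · rw [Wm, Matrix.of_apply, if_pos h, lam_succ (c := c) hQ h, smul_eq_mul]
    ring
  · rw [Wm, Matrix.of_apply, if_neg h]
    simp

lemma rel2 (hq0 : 0 < q) (hq1 : q < 1) :
    (Wm q c n)ᴴ * Zm q c n = ((q:ℂ)^2) • (Zm q c n * (Wm q c n)ᴴ) := by
  have hQ : (q:ℂ) ≠ 0 := by exact_mod_cast hq0.ne'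
  ext i j
  rw [Zm, Matrix.smul_apply, Matrix.diagonal_mul, Matrix.mul_diagonal,
      Wm_conjT_apply]
  by_cases h : (j:ℕ) = (i:ℕ)+1
  · rw [if_pos h, lam_succ (c := c) hQ h, smul_eq_mul]
    ring
  · rw [if_neg h]
    simp

lemma WdW :
    (Wm q c n)ᴴ * Wm q c n
      = Matrix.diagonal (fun k => ((gam q c n k : ℝ) : ℂ)^2) := by
  ext i j
  rw [Matrix.mul_apply]
  by_cases hij : i = j
  · subst hij
    rw [Matrix.diagonal_apply_eq]
    have hterm : ∀ l : Fin (n+1),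
        (Wm q c n)ᴴ i l * Wm q c n l i
          = if (l:ℕ) = (i:ℕ)+1 then ((gam q c n i : ℝ) : ℂ)^2 else 0 := by
      intro l
      rw [Wm_conjT_apply, Wm, Matrix.of_apply]
      split_ifs with h
      · ring
      · simp
    rw [Finset.sum_congr rfl (fun l _ => hterm l), sum_shift_up]
    split_ifs with h
    · rfl
    · have : (i:ℕ) = n := by have := i.isLt; omega
      rw [gam_eq_zero_of_last i this]
      simp
  · rw [Matrix.diagonal_apply_ne _ hij]
    apply Finset.sum_eq_zero
    intro l _
    rw [Wm_conjT_apply, Wm, Matrix.of_apply]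
    split_ifs with h1 h2
    · exact absurd (Fin.ext (by omega) : i = j) hij
    all_goals ring

lemma WWd :
    Wm q c n * (Wm q c n)ᴴ
      = Matrix.diagonal (fun i : Fin (n+1) =>
          if 0 < (i:ℕ) then ((gam q c n ⟨(i:ℕ)-1, by omega⟩ : ℝ) : ℂ)^2 else 0) := by
  ext i j
  rw [Matrix.mul_apply]
  by_cases hij : i = j
  · subst hij
    rw [Matrix.diagonal_apply_eq]
    have hterm : ∀ l : Fin (n+1),
        Wm q c n i l * (Wm q c n)ᴴ l i
          = if (i:ℕ) = (l:ℕ)+1 then ((gam q c n l : ℝ) : ℂ)^2 else 0 := by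
      intro l
      rw [Wm_conjT_apply, Wm, Matrix.of_apply]
      split_ifs with h
      · ring
      · simp
    rw [Finset.sum_congr rfl (fun l _ => hterm l), sum_shift_down]
    split_ifs with h
    · rfl
    · rfl
  · rw [Matrix.diagonal_apply_ne _ hij]
    apply Finset.sum_eq_zero
    intro l _
    rw [Wm_conjT_apply, Wm, Matrix.of_apply]
    split_ifs with h1 h2
    · exact absurd (Fin.ext (by omega) : i = j) hij
    all_goals ring

end OqH2Aux

namespace OqH2Aux
variable {q c : ℝ} {n : ℕ}

lemma rel3 (hq0 : 0 < q) (hq1 : q < 1) :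
    (((q:ℂ)^2)⁻¹) • ((Wm q c n)ᴴ * Wm q c n)
      = -(((c:ℂ)^2) • (1 : Matrix (Fin (n+1)) (Fin (n+1)) ℂ))
        + (q:ℂ) • (((c:ℂ) * ((q:ℂ)^((n:ℤ)+1) + (q:ℂ)^(-(n:ℤ)-1))) • Zm q c n)
        - ((q:ℂ)^2) • (Zm q c n * Zm q c n) := by
  rw [WdW]
  ext i j
  by_cases hij : i = j
  · subst hij
    simp only [Matrix.smul_apply, Matrix.add_apply, Matrix.sub_apply, Matrix.neg_apply,
      Zm, Matrix.diagonal_mul_diagonal, Matrix.diagonal_apply_eq, Matrix.one_apply_eq,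
      smul_eq_mul]
    linear_combination idA (c := c) hq0 hq1 i
  · simp only [Matrix.smul_apply, Matrix.add_apply, Matrix.sub_apply, Matrix.neg_apply,
      Zm, Matrix.diagonal_mul_diagonal, Matrix.diagonal_apply_ne _ hij,
      Matrix.one_apply_ne hij, smul_eq_mul]
    ring

lemma rel4 (hq0 : 0 < q) (hq1 : q < 1) :
    (((q:ℂ)^2)⁻¹) • (Wm q c n * (Wm q c n)ᴴ)
      = -(((c:ℂ)^2) • (1 : Matrix (Fin (n+1)) (Fin (n+1)) ℂ))
        + ((q:ℂ)⁻¹) • (((c:ℂ) * ((q:ℂ)^((n:ℤ)+1) + (q:ℂ)^(-(n:ℤ)-1))) • Zm q c n)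
        - (((q:ℂ)^2)⁻¹) • (Zm q c n * Zm q c n) := by
  rw [WWd]
  ext i j
  by_cases hij : i = j
  · subst hij
    simp only [Matrix.smul_apply, Matrix.add_apply, Matrix.sub_apply, Matrix.neg_apply,
      Zm, Matrix.diagonal_mul_diagonal, Matrix.diagonal_apply_eq, Matrix.one_apply_eq,
      smul_eq_mul]
    split_ifs with h
    · have hik : (i:ℕ) = ((⟨(i:ℕ)-1, by omega⟩ : Fin (n+1)) : ℕ) + 1 := by
        simp only [Fin.val_mk]; omega
      linear_combination idB (c := c) hq0 hq1 ⟨(i:ℕ)-1, by omega⟩ i hik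
    · have h0 : i = (0 : Fin (n+1)) := Fin.ext (by rw [Fin.val_zero]; omega)
      subst h0
      linear_combination idB0 (q := q) (c := c) (n := n) hq0 hq1
  · simp only [Matrix.smul_apply, Matrix.add_apply, Matrix.sub_apply, Matrix.neg_apply,
      Zm, Matrix.diagonal_mul_diagonal, Matrix.diagonal_apply_ne _ hij,
      Matrix.one_apply_ne hij, smul_eq_mul]
    ring

end OqH2Aux

namespace OqH2Aux
variable {q c : ℝ} {n : ℕ}

lemma commutant (hq0 : 0 < q) (hq1 : q < 1) (hc : c ≠ 0)
    (M : Matrix (Fin (n+1)) (Fin (n+1)) ℂ)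
    (hZ : M * Zm q c n = Zm q c n * M) (hW : M * Wm q c n = Wm q c n * M) :
    M = (M 0 0) • 1 := by
  have hod : ∀ i j : Fin (n+1), i ≠ j → M i j = 0 := by
    intro i j hij
    have h := congrFun (congrFun hZ i) j
    rw [Zm, Matrix.mul_diagonal, Matrix.diagonal_mul] at h
    by_contra hne
    have h2 : M i j * lam q c n j = M i j * lam q c n i := by rw [h]; ring
    have h3 : lam q c n j = lam q c n i := mul_left_cancel₀ hne h2
    exact hij (lam_inj hq0 hq1 hc h3.symm)
  have hdiag : ∀ k : Fin n, M k.succ k.succ = M k.castSucc k.castSucc := by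
    intro k
    have h := congrFun (congrFun hW k.succ) k.castSucc
    rw [Matrix.mul_apply, Matrix.mul_apply] at h
    have hL : ∀ l : Fin (n+1), M k.succ l * Wm q c n l k.castSucc
        = if (l:ℕ) = ((k.castSucc : Fin (n+1)):ℕ)+1
            then M k.succ l * ((gam q c n k.castSucc : ℝ) : ℂ) else 0 := by
      intro l
      rw [Wm, Matrix.of_apply, mul_ite, mul_zero]
    have hR : ∀ l : Fin (n+1), Wm q c n (k.succ) l * M l k.castSucc
        = if ((k.succ : Fin (n+1)):ℕ) = (l:ℕ)+1
            then ((gam q c n l : ℝ) : ℂ) * M l k.castSucc else 0 := by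
      intro l
      rw [Wm, Matrix.of_apply, ite_mul, zero_mul]
    rw [Finset.sum_congr rfl (fun l _ => hL l),
        Finset.sum_congr rfl (fun l _ => hR l), sum_shift_up, sum_shift_down] at h
    have hk : ((k.castSucc : Fin (n+1)):ℕ) < n := by simp
    have hk' : 0 < ((k.succ : Fin (n+1)):ℕ) := by simp
    rw [dif_pos hk, dif_pos hk'] at h
    have e1 : (⟨((k.castSucc : Fin (n+1)):ℕ)+1, by omega⟩ : Fin (n+1)) = k.succ := by
      apply Fin.ext; simp
    have e2 : (⟨((k.succ : Fin (n+1)):ℕ)-1, by omega⟩ : Fin (n+1)) = k.castSucc := by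
      apply Fin.ext; simp
    rw [e1, e2] at h
    have hg : ((gam q c n k.castSucc : ℝ) : ℂ) ≠ 0 := by
      exact_mod_cast (gam_pos hq0 hq1 hc k.castSucc (by simp)).ne'
    have h2 : M k.succ k.succ * ((gam q c n k.castSucc : ℝ) : ℂ)
        = M k.castSucc k.castSucc * ((gam q c n k.castSucc : ℝ) : ℂ) := by
      rw [h]; ring
    exact mul_right_cancel₀ hg h2
  have hall : ∀ i : Fin (n+1), M i i = M 0 0 := by
    intro i
    induction i using Fin.induction with
    | zero => rfl
    | succ k ih => rw [hdiag k]; exact ih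
  ext i j
  by_cases hij : i = j
  · subst hij
    rw [hall i, Matrix.smul_apply, Matrix.one_apply_eq, smul_eq_mul, mul_one]
  · rw [hod i j hij, Matrix.smul_apply, Matrix.one_apply_ne hij, smul_eq_mul, mul_zero]

end OqH2Aux

set_option maxHeartbeats 1000000 in
open OqH2Aux in
/-- For `0 < q < 1`, `c ∈ ℝ^×`, `n ∈ ℤ≥0` there exist bounded operators `z`, `w`
(with `v = w*`) on `ℂ^{n+1}` with `z e_k = c q^{-n+2k} e_k`, `v e_0 = 0`, satisfying the
defining relations of `O_q(H(2))` with `T = c(q^{n+1} + q^{-n-1})` and `D = c²`, and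
with trivial commutant (so this defines an irreducible `*`-representation). -/
theorem OqH2_finite_dim_irrep_exists (q c : ℝ) (hq0 : 0 < q) (hq1 : q < 1)
    (hc : c ≠ 0) (n : ℕ) :
    ∃ z w : EuclideanSpace ℂ (Fin (n + 1)) →L[ℂ] EuclideanSpace ℂ (Fin (n + 1)),
      (∀ k : Fin (n + 1),
        z (EuclideanSpace.single k 1)
          = ((c : ℂ) * (q : ℂ) ^ (-(n : ℤ) + 2 * (k : ℤ))) • EuclideanSpace.single k 1) ∧
      IsSelfAdjoint z ∧
      (ContinuousLinearMap.adjoint w) (EuclideanSpace.single (0 : Fin (n + 1)) 1) = 0 ∧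
      z * w = ((q : ℂ) ^ 2) • (w * z) ∧
      (ContinuousLinearMap.adjoint w) * z
        = ((q : ℂ) ^ 2) • (z * ContinuousLinearMap.adjoint w) ∧
      (((q : ℂ) ^ 2)⁻¹) • ((ContinuousLinearMap.adjoint w) * w)
        = -(((c : ℂ) ^ 2) • (1 : EuclideanSpace ℂ (Fin (n + 1)) →L[ℂ] EuclideanSpace ℂ (Fin (n + 1))))
          + (q : ℂ) • (((c : ℂ) * ((q : ℂ) ^ ((n : ℤ) + 1) + (q : ℂ) ^ (-(n : ℤ) - 1))) • z)
          - ((q : ℂ) ^ 2) • (z * z) ∧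
      (((q : ℂ) ^ 2)⁻¹) • (w * ContinuousLinearMap.adjoint w)
        = -(((c : ℂ) ^ 2) • (1 : EuclideanSpace ℂ (Fin (n + 1)) →L[ℂ] EuclideanSpace ℂ (Fin (n + 1))))
          + ((q : ℂ)⁻¹) • (((c : ℂ) * ((q : ℂ) ^ ((n : ℤ) + 1) + (q : ℂ) ^ (-(n : ℤ) - 1))) • z)
          - (((q : ℂ) ^ 2)⁻¹) • (z * z) ∧
      (∀ B : EuclideanSpace ℂ (Fin (n + 1)) →L[ℂ] EuclideanSpace ℂ (Fin (n + 1)),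
        Commute B z → Commute B w → Commute B (ContinuousLinearMap.adjoint w) →
        ∃ μ : ℂ, B = μ • 1) := by
  classical
  set f := Matrix.toEuclideanCLM (n := Fin (n+1)) (𝕜 := ℂ) with hf
  refine ⟨f (Zm q c n), f (Wm q c n), ?_, ?_, ?_, ?_, ?_, ?_, ?_, ?_⟩
  · -- z on basis vectors
    intro k
    have : f (Zm q c n) (EuclideanSpace.single k 1)
        = (WithLp.equiv _ _).symm ((Zm q c n).mulVec (Pi.single k 1)) := rfl
    rw [this, Zm, Matrix.diagonal_mulVec_single, mul_one]
    ext j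
    simp [EuclideanSpace.single_apply, PiLp.toLp_apply, Pi.single_apply, lam,
      mul_comm]
  · -- self-adjoint
    have hv : star (lam q c n) = lam q c n := funext fun k => lam_conj k
    have hZ : star (Zm q c n) = Zm q c n := by
      rw [Matrix.star_eq_conjTranspose, Zm, Matrix.diagonal_conjTranspose, hv]
    have : star (f (Zm q c n)) = f (Zm q c n) := by rw [← map_star, hZ]
    exact this
  · -- v e_0 = 0
    rw [← ContinuousLinearMap.star_eq_adjoint, ← map_star]
    have : f (star (Wm q c n)) (EuclideanSpace.single 0 1)
        = (WithLp.equiv _ _).symm ((star (Wm q c n)).mulVec (Pi.single 0 1)) := rfl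
    rw [this]
    have h0 : (star (Wm q c n)).mulVec (Pi.single (0 : Fin (n+1)) 1) = 0 := by
      funext i
      simp only [Matrix.star_eq_conjTranspose, Matrix.mulVec_single, Pi.zero_apply,
        Pi.smul_apply, op_smul_eq_mul, Matrix.col_apply]
      rw [Wm_conjT_apply, if_neg (by simp), zero_mul]
    rw [h0]
    rfl
  · rw [← _root_.map_mul, ← _root_.map_mul, ← _root_.map_smul, rel1 hq0 hq1]
  · rw [← ContinuousLinearMap.star_eq_adjoint, ← map_star, ← _root_.map_mul, ← _root_.map_mul, ← _root_.map_smul,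
      Matrix.star_eq_conjTranspose, rel2 hq0 hq1]
  · rw [← ContinuousLinearMap.star_eq_adjoint, ← map_star, ← _root_.map_mul, ← _root_.map_mul, ← _root_.map_smul,
      ← _root_.map_smul, ← _root_.map_smul, ← _root_.map_smul, ← _root_.map_one f, ← _root_.map_smul, ← _root_.map_neg, ← _root_.map_add,
      ← _root_.map_sub, Matrix.star_eq_conjTranspose, rel3 hq0 hq1]
  · rw [← ContinuousLinearMap.star_eq_adjoint, ← map_star, ← _root_.map_mul, ← _root_.map_mul, ← _root_.map_smul,
      ← _root_.map_smul, ← _root_.map_smul, ← _root_.map_smul, ← _root_.map_one f, ← _root_.map_smul, ← _root_.map_neg, ← _root_.map_add,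
      ← _root_.map_sub, Matrix.star_eq_conjTranspose, rel4 hq0 hq1]
  · -- commutant
    intro B hBz hBw _
    set M := f.symm B with hM
    have hB : f M = B := f.apply_symm_apply B
    have hBz' : f M * f (Zm q c n) = f (Zm q c n) * f M := by rw [hB]; exact hBz
    have hBw' : f M * f (Wm q c n) = f (Wm q c n) * f M := by rw [hB]; exact hBw
    have hZ : M * Zm q c n = Zm q c n * M :=
      f.injective ((_root_.map_mul f M (Zm q c n)).trans
        (hBz'.trans (_root_.map_mul f (Zm q c n) M).symm))
    have hW : M * Wm q c n = Wm q c n * M :=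
      f.injective ((_root_.map_mul f M (Wm q c n)).trans
        (hBw'.trans (_root_.map_mul f (Wm q c n) M).symm))
    refine ⟨M 0 0, ?_⟩
    conv_lhs => rw [← hB, commutant hq0 hq1 hc M hZ hW]
    rw [_root_.map_smul, _root_.map_one]
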